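/- For every real θ > 0 and every α > 0, the series Σ_{i≥1} θ^i/(i·((i−1)!)^α) converges; moreover, setting w_0 = 0 and w_i = θ^i/(i·((i−1)!)^α) for i ≥ 1, and writing θ = b/c with b, c > 0, one has for every integer i ≥ 1 the stationarity (balance) equation b(i−1)w_{i−1} + c(i+1)i^α w_{i+1} = i(b + c(i−1)^α) w_i. (Thus the normalized weights P(ξ^{(α)} = i) = C θ^i/(i((i−1)!)^α) form a stationary distribution of the α-logistic branching process with birth rate b·i and death rate c·i·(i−1)^α.) -/

import Mathlib

/-- The stationary weights of the α-logistic branching process with parameters (b, c, 0):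
`w i = θ^i / (i * ((i-1)!)^α)` for `i ≥ 1` (and `w 0 = 0`) are summable, and satisfy the
balance (stationarity) equation
`b(i−1)w_{i−1} + c(i+1)i^α w_{i+1} = i(b + c(i−1)^α) w_i` for every `i ≥ 1`,
where `θ = b/c`. -/
theorem stmt_0 (θ α : ℝ) (hθ : 0 < θ) (hα : 0 < α)
    (w : ℕ → ℝ) (hw0 : w 0 = 0)
    (hw : ∀ i : ℕ, 1 ≤ i →
      w i = θ ^ i / ((i : ℝ) * ((Nat.factorial (i - 1) : ℝ) ^ α))) :
    Summable w ∧
    ∀ b c : ℝ, 0 < b → 0 < c → θ = b / c →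
      ∀ i : ℕ, 1 ≤ i →
        b * ((i : ℝ) - 1) * w (i - 1)
          + c * ((i : ℝ) + 1) * (i : ℝ) ^ α * w (i + 1)
        = (i : ℝ) * (b + c * ((i : ℝ) - 1) ^ α) * w i := by
  -- positivity of weights
  have hwpos : ∀ i : ℕ, 1 ≤ i → 0 < w i := by
    intro i hi
    rw [hw i hi]
    have h0 : (0:ℝ) < (i:ℝ) := by exact_mod_cast hi
    positivity
  constructor
  · -- summability via ratio test
    have htend : Filter.Tendsto (fun n : ℕ => (n:ℝ) ^ α) Filter.atTop Filter.atTop :=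
      (tendsto_rpow_atTop hα).comp tendsto_natCast_atTop_atTop
    have hev : ∀ᶠ i : ℕ in Filter.atTop, ‖w (i+1)‖ ≤ (1/2 : ℝ) * ‖w i‖ := by
      filter_upwards [htend.eventually_ge_atTop (2*θ), Filter.eventually_ge_atTop 1]
        with i h2θ hi1
      have hipos : (0:ℝ) < (i:ℝ) := by exact_mod_cast hi1
      have hA : (0:ℝ) < ((Nat.factorial (i-1) : ℝ)) ^ α := by positivity
      set A : ℝ := ((Nat.factorial (i-1) : ℝ)) ^ α with hAdef
      have hfac : ((Nat.factorial i : ℝ)) ^ α = (i:ℝ)^α * A := by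
        have : (Nat.factorial i : ℝ) = (i:ℝ) * (Nat.factorial (i-1) : ℝ) := by
          obtain ⟨j, rfl⟩ : ∃ j, i = j + 1 := ⟨i-1, by omega⟩
          simp [Nat.factorial_succ]
        rw [this, Real.mul_rpow (le_of_lt hipos) (by positivity)]
      have hwn : w (i+1) = θ^(i+1) / (((i:ℝ)+1) * ((i:ℝ)^α * A)) := by
        rw [hw (i+1) (by omega)]
        simp only [Nat.add_sub_cancel]
        rw [hfac]
        push_cast
        ring_nf
      have hwi : w i = θ^i / ((i:ℝ) * A) := hw i hi1
      rw [Real.norm_of_nonneg (le_of_lt (hwpos (i+1) (by omega))),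
          Real.norm_of_nonneg (le_of_lt (hwpos i hi1)), hwn, hwi]
      have hiα : (0:ℝ) < (i:ℝ)^α := by positivity
      have hrw : (1/2:ℝ) * (θ^i / ((i:ℝ) * A)) = θ^i / (2*(i:ℝ)*A) := by
        rw [div_mul_eq_mul_div, one_mul, div_div]
        ring_nf
      rw [hrw, div_le_div_iff₀ (by positivity) (by positivity)]
      have hθi : (0:ℝ) < θ^i := by positivity
      have key : 2*(i:ℝ)*θ ≤ ((i:ℝ)+1) * (i:ℝ)^α := by
        nlinarith [mul_le_mul_of_nonneg_left h2θ (le_of_lt hipos)]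
      calc θ^(i+1) * (2*(i:ℝ)*A) = (θ^i * A) * (2*(i:ℝ)*θ) := by ring
        _ ≤ (θ^i * A) * (((i:ℝ)+1) * (i:ℝ)^α) := by
            apply mul_le_mul_of_nonneg_left key (by positivity)
        _ = θ^i * (((i:ℝ)+1) * ((i:ℝ)^α * A)) := by ring
    exact summable_of_ratio_norm_eventually_le (by norm_num) hev
  · intro b c hb hc hθbc i hi
    have hbeq : b = c * θ := by rw [hθbc]; field_simp
    match i, hi with
    | 1, _ =>
      have h1 : w 1 = θ := by rw [hw 1 le_rfl]; simp
      have h2 : w 2 = θ^2 / (2 : ℝ) := by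
        rw [hw 2 (by norm_num)]
        norm_num
      simp only [Nat.sub_self, hw0, h1, h2]
      push_cast
      rw [show ((1:ℝ) - 1) = 0 by norm_num, Real.zero_rpow (ne_of_gt hα), Real.one_rpow]
      rw [hbeq]; ring
    | (k+2), _ =>
      have hA : (0:ℝ) < ((Nat.factorial k : ℝ)) ^ α := by positivity
      set A : ℝ := ((Nat.factorial k : ℝ)) ^ α with hAdef
      have hp : (0:ℝ) < ((k:ℝ)+1)^α := by positivity
      have hq : (0:ℝ) < ((k:ℝ)+2)^α := by positivity
      have hf1 : ((Nat.factorial (k+1) : ℝ)) ^ α = ((k:ℝ)+1)^α * A := by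
        rw [Nat.factorial_succ]
        push_cast
        rw [Real.mul_rpow (by positivity) (by positivity)]
      have hf2 : ((Nat.factorial (k+2) : ℝ)) ^ α = ((k:ℝ)+2)^α * (((k:ℝ)+1)^α * A) := by
        rw [Nat.factorial_succ]
        push_cast
        rw [Real.mul_rpow (by positivity) (by positivity), hf1]
        push_cast; ring
      have e1 : w (k+1) = θ^(k+1) / (((k:ℝ)+1) * A) := by
        rw [hw (k+1) (by omega), show k+1-1 = k from rfl]; push_cast; rw [hAdef]
      have e2 : w (k+2) = θ^(k+2) / (((k:ℝ)+2) * (((k:ℝ)+1)^α * A)) := by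
        rw [hw (k+2) (by omega), show k+2-1 = k+1 from rfl, hf1]
        push_cast; ring_nf
      have e3 : w (k+3) = θ^(k+3) / (((k:ℝ)+3) * (((k:ℝ)+2)^α * (((k:ℝ)+1)^α * A))) := by
        rw [hw (k+3) (by omega), show k+3-1 = k+2 from rfl, hf2]
        push_cast; ring_nf
      have hidx : k + 2 - 1 = k + 1 := by omega
      have hidx2 : k + 2 + 1 = k + 3 := by omega
      rw [hidx, hidx2, e1, e2, e3]
      push_cast
      have hc1 : ((k:ℝ)+2-1) = ((k:ℝ)+1) := by ring
      rw [hc1, hbeq]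
      field_simp
      ring
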